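/- Let γ : S¹ → S² be a C² closed curve with constant speed v > 0 bounded by |γ̇| ≤ C and with ‖γ‖_{C²} ≤ C. If γ(θ₁) = γ(θ₂) for θ₁ ≠ θ₂ in S¹ = ℝ/ℤ and γ is a C² limit of embedded curves, then there exists δ > 0 depending only on the C³ bound and the lower speed bound (not on γ) such that δ ≤ |θ₁ − θ₂| ≤ 1 − δ. -/

import Mathlib

open Real Filter Set

noncomputable section

/-- Euclidean 3-space, ambient space of the 2-sphere. -/
abbrev E3 := EuclideanSpace ℝ (Fin 3)

/-- The 2-sphere, as the unit sphere in `E3`. -/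
def Sph : Set E3 := Metric.sphere 0 1

/-- A simple (embedded) closed curve of period 1 (`S¹ = ℝ/ℤ`). -/
def IsSimpleClosed (γ : ℝ → E3) : Prop :=
  Function.Periodic γ 1 ∧ Set.InjOn γ (Set.Ico (0:ℝ) 1)

/-- Convergence in `C²(S¹, S²)`: uniform convergence of curves and of their
first and second derivatives. -/
def TendstoC2 (γn : ℕ → ℝ → E3) (γ : ℝ → E3) : Prop :=
  TendstoUniformly γn γ atTop ∧
  TendstoUniformly (fun n => deriv (γn n)) (deriv γ) atTop ∧
  TendstoUniformly (fun n => deriv (deriv (γn n))) (deriv (deriv γ)) atTop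

/-- Key quantitative lemma: constant-speed curve with bounded second
derivative cannot self-intersect at nearby parameters. -/
theorem key_speed_le (C v : ℝ) (γ : ℝ → E3)
    (hγ : ContDiff ℝ 3 γ)
    (hv : ∀ t, ‖deriv γ t‖ = v)
    (hC2 : ∀ t, ‖deriv (deriv γ) t‖ ≤ C)
    {s t : ℝ} (hst : s < t) (heq : γ s = γ t) :
    v ≤ C * (t - s) := by
  have hd1 : Differentiable ℝ γ := hγ.differentiable (by norm_num)
  have hd2 : Differentiable ℝ (deriv γ) :=
    (hγ.iterate_deriv' 2 1).differentiable (by norm_num)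
  -- bound on deriv γ u - deriv γ s for u ∈ Icc s t
  have hbd : ∀ u ∈ Icc s t, ‖deriv γ u - deriv γ s‖ ≤ C * (t - s) := by
    intro u hu
    have h := (convex_univ : Convex ℝ (univ : Set ℝ)).norm_image_sub_le_of_norm_deriv_le
      (fun x _ => hd2 x)
      (fun x _ => by simpa using hC2 x) (mem_univ s) (mem_univ u)
    calc ‖deriv γ u - deriv γ s‖ ≤ C * ‖u - s‖ := by
          simpa [derivWithin_univ] using h
      _ ≤ C * (t - s) := by
          have hC0 : 0 ≤ C := le_trans (norm_nonneg _) (hC2 s)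
          have : ‖u - s‖ ≤ t - s := by
            rw [Real.norm_eq_abs, abs_of_nonneg (by linarith [hu.1])]
            linarith [hu.2]
          nlinarith
  -- g u = γ u - u • deriv γ s
  set w := deriv γ s with hw
  have hg : ∀ u ∈ Icc s t, HasDerivWithinAt (fun u => γ u - u • w)
      (deriv γ u - w) (Icc s t) u := by
    intro u hu
    have := (((hd1 u).hasDerivAt).sub ((hasDerivAt_id u).smul_const w)).hasDerivWithinAt (s := Icc s t)
    exact (((hd1 u).hasDerivAt.sub ((hasDerivAt_id u).smul_const w)).congr_deriv (by simp)).hasDerivWithinAt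
  have h := (convex_Icc s t).norm_image_sub_le_of_norm_hasDerivWithin_le hg
    hbd (left_mem_Icc.2 hst.le) (right_mem_Icc.2 hst.le)
  have hnorm : ‖(γ t - t • w) - (γ s - s • w)‖ = (t - s) * v := by
    rw [heq]
    have : (γ t - t • w) - (γ t - s • w) = -((t - s) • w) := by
      rw [sub_smul]; abel
    rw [this, norm_neg, norm_smul, Real.norm_eq_abs, abs_of_nonneg (by linarith),
      hv s]
  rw [hnorm] at h
  have h2 : (t - s) * v ≤ C * (t - s) * (t - s) := by
    calc (t-s)*v ≤ C*(t-s) * ‖t - s‖ := h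
      _ = C*(t-s)*(t-s) := by rw [Real.norm_eq_abs, abs_of_pos (by linarith)]
  nlinarith [sub_pos.2 hst]


/-- there is `δ > 0`, depending only on the `C³` bound `C` and
the lower speed bound `1/C` (not on the curve), such that any `C³` closed
curve `γ` on `S²` with constant speed `v ≥ 1/C`, `C³`-norm at most `C`, which
is a `C²`-limit of embedded curves, has any self-intersection parameters
`θ₁ ≠ θ₂` (in `S¹ = ℝ/ℤ`, represented in `[0,1)`) separated:
`δ ≤ |θ₁ − θ₂| ≤ 1 − δ`. -/
theorem uniform_separation_of_self_intersections
    (C : ℝ) (hC : 0 < C) :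
    ∃ δ > (0:ℝ), ∀ (γ : ℝ → E3) (v : ℝ),
      ContDiff ℝ 3 γ → Function.Periodic γ 1 → (∀ t, γ t ∈ Sph) →
      (∀ t, ‖deriv γ t‖ = v) → 1 / C ≤ v →
      (∀ t, ‖deriv γ t‖ ≤ C ∧ ‖deriv (deriv γ) t‖ ≤ C ∧
        ‖deriv (deriv (deriv γ)) t‖ ≤ C) →
      (∃ γn : ℕ → ℝ → E3,
        (∀ n, IsSimpleClosed (γn n) ∧ ∀ t, γn n t ∈ Sph) ∧ TendstoC2 γn γ) →
      ∀ θ₁ ∈ Set.Ico (0:ℝ) 1, ∀ θ₂ ∈ Set.Ico (0:ℝ) 1,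
        θ₁ ≠ θ₂ → γ θ₁ = γ θ₂ →
        δ ≤ |θ₁ - θ₂| ∧ |θ₁ - θ₂| ≤ 1 - δ := by
  refine ⟨min (1 / (2 * C ^ 2)) (1 / 2), lt_min (by positivity) (by norm_num), ?_⟩
  intro γ v hγ hper _ hv hvC hbnd _ θ₁ hθ₁ θ₂ hθ₂ hne heq
  set δ := min (1 / (2 * C ^ 2)) (1 / 2) with hδ
  have hδ2 : δ ≤ 1 / (2 * C ^ 2) := min_le_left _ _
  have hvpos : 0 < v := lt_of_lt_of_le (by positivity) hvC
  have key : ∀ s t : ℝ, γ s = γ t → ¬ (s < t ∧ t - s < δ) := by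
    intro s t he ⟨h1, h2⟩
    have hk := key_speed_le C v γ hγ hv (fun t => (hbnd t).2.1) h1 he
    have : C * (t - s) < C * (1 / (2 * C ^ 2)) := by
      have := lt_of_lt_of_le h2 hδ2
      nlinarith
    have h3 : C * (1 / (2 * C ^ 2)) = 1 / (2 * C) := by field_simp
    have h4 : 1 / (2 * C) < 1 / C := by
      rw [div_lt_div_iff₀ (by positivity) hC]; nlinarith
    linarith [hvC]
  have keyabs : ∀ s t : ℝ, γ s = γ t → s ≠ t → δ ≤ |s - t| := by
    intro s t he hne'
    by_contra hcon
    push_neg at hcon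
    rcases lt_or_gt_of_ne hne' with hlt | hlt
    · exact key s t he ⟨hlt, by rw [abs_sub_comm, abs_of_pos (sub_pos.2 hlt)] at hcon; linarith⟩
    · exact key t s he.symm ⟨hlt, by rw [abs_of_pos (sub_pos.2 hlt)] at hcon; linarith⟩
  refine ⟨keyabs θ₁ θ₂ heq hne, ?_⟩
  rcases lt_or_gt_of_ne hne with hlt | hlt
  · have he2 : γ θ₂ = γ (θ₁ + 1) := heq.symm.trans (hper θ₁).symm
    have h2 : δ ≤ |θ₂ - (θ₁ + 1)| := keyabs θ₂ (θ₁ + 1) he2 (by intro hh; rw [hh] at hθ₂; linarith [hθ₂.2, hθ₁.1])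
    have h3 : |θ₂ - (θ₁ + 1)| = 1 - (θ₂ - θ₁) := by
      rw [abs_of_nonpos (by linarith [hθ₂.2, hθ₁.1])]; ring
    have h4 : |θ₁ - θ₂| = θ₂ - θ₁ := by rw [abs_sub_comm, abs_of_pos (sub_pos.2 hlt)]
    rw [h3] at h2; linarith
  · have he2 : γ θ₁ = γ (θ₂ + 1) := heq.trans (hper θ₂).symm
    have h2 : δ ≤ |θ₁ - (θ₂ + 1)| := keyabs θ₁ (θ₂ + 1) he2 (by intro hh; rw [hh] at hθ₁; linarith [hθ₁.2, hθ₂.1])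
    have h3 : |θ₁ - (θ₂ + 1)| = 1 - (θ₁ - θ₂) := by
      rw [abs_of_nonpos (by linarith [hθ₁.2, hθ₂.1])]; ring
    have h4 : |θ₁ - θ₂| = θ₁ - θ₂ := abs_of_pos (sub_pos.2 hlt)
    rw [h3] at h2; linarith
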